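/- The ε-product fails the C*-identity: if v ∈ H is a unit vector and A is the bounded operator on H̃ defined by A(z,λ) = (⟨v,z⟩·v, ⟨v,z⟩), then A ≠ 0, A* ∘ ε ∘ A = 0, and A* ∘ A = 2·Ẽ where Ẽ(z,λ) = (⟨v,z⟩·v, 0), so that ‖A‖² = 2; in particular ‖A* ∗ε A‖ = 0 ≠ ‖A‖². -/

import Mathlib

/-- The extended Hilbert space `H̃ = H ⊕ ℂ` (Hilbert space direct sum). -/
noncomputable abbrev ExtH (H : Type*) [NormedAddCommGroup H] [InnerProductSpace ℂ H] :=
  WithLp 2 (H × ℂ)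

/-- The element `(z, a)` of `H̃`. -/
noncomputable def mk2 {H : Type*} [NormedAddCommGroup H] [InnerProductSpace ℂ H]
    (z : H) (a : ℂ) : ExtH H :=
  (WithLp.equiv 2 (H × ℂ)).symm (z, a)

lemma mk2_surj {H : Type*} [NormedAddCommGroup H] [InnerProductSpace ℂ H]
    (x : ExtH H) : x = mk2 x.fst x.snd := rfl

lemma inner_mk2 {H : Type*} [NormedAddCommGroup H] [InnerProductSpace ℂ H]
    (z w : H) (a b : ℂ) :
    (inner ℂ (mk2 z a) (mk2 w b) : ℂ) = inner ℂ z w + starRingEnd ℂ a * b := by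
  rw [WithLp.prod_inner_apply]
  show inner ℂ z w + inner ℂ a b = _
  rw [RCLike.inner_apply]
  ring

lemma norm_mk2_sq {H : Type*} [NormedAddCommGroup H] [InnerProductSpace ℂ H]
    (z : H) (a : ℂ) : ‖mk2 z a‖ ^ 2 = ‖z‖ ^ 2 + ‖a‖ ^ 2 :=
  WithLp.prod_norm_sq_eq_of_L2 _

open ContinuousLinearMap in
/-- the ε-product fails the C*-identity: for a unit vector `v ∈ H`, the
operator `A(z,λ) = (⟨v,z⟩v, ⟨v,z⟩)` on `H̃` satisfies `A ≠ 0`, `A* ∘ ε ∘ A = 0`,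
`A* ∘ A = 2Ẽ` with `Ẽ(z,λ) = (⟨v,z⟩v, 0)`, hence `‖A‖² = 2` while `‖A* ∗ε A‖ = 0`. -/
theorem eps_product_fails_cstar_identity
    {H : Type*} [NormedAddCommGroup H] [InnerProductSpace ℂ H] [CompleteSpace H]
    (ε : ExtH H →L[ℂ] ExtH H) (hε : ∀ (z : H) (l : ℂ), ε (mk2 z l) = mk2 (-z) l)
    (v : H) (hv : ‖v‖ = 1)
    (A : ExtH H →L[ℂ] ExtH H)
    (hA : ∀ (z : H) (l : ℂ), A (mk2 z l) = mk2 ((inner ℂ v z : ℂ) • v) (inner ℂ v z : ℂ))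
    (E : ExtH H →L[ℂ] ExtH H)
    (hE : ∀ (z : H) (l : ℂ), E (mk2 z l) = mk2 ((inner ℂ v z : ℂ) • v) 0) :
    A ≠ 0 ∧
    adjoint A ∘L ε ∘L A = 0 ∧
    adjoint A ∘L A = (2 : ℂ) • E ∧
    ‖A‖ ^ 2 = 2 ∧
    ‖adjoint A ∘L ε ∘L A‖ = 0 ∧
    ‖adjoint A ∘L ε ∘L A‖ ≠ ‖A‖ ^ 2 := by
  have hvv : (inner ℂ v v : ℂ) = 1 := by
    rw [inner_self_eq_norm_sq_to_K, hv]; norm_num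
  -- A ≠ 0
  have hA0 : A ≠ 0 := by
    intro h
    have h1 : A (mk2 v 0) = 0 := by rw [h]; rfl
    rw [hA, hvv] at h1
    have := congrArg WithLp.snd h1
    simp [mk2] at this
  -- A* ∘ ε ∘ A = 0
  have hzero : adjoint A ∘L ε ∘L A = 0 := by
    ext x
    rw [mk2_surj x]
    set z := x.fst; set l := x.snd
    refine ext_inner_right ℂ fun y => ?_
    rw [mk2_surj y]
    simp only [comp_apply, zero_apply, inner_zero_left]
    rw [adjoint_inner_left, hA, hε, hA, inner_mk2]
    rw [inner_neg_left, inner_smul_left, inner_smul_right, hvv]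
    ring
  -- A* ∘ A = 2E
  have htwoE : adjoint A ∘L A = (2 : ℂ) • E := by
    ext x
    rw [mk2_surj x]
    set z := x.fst; set l := x.snd
    refine ext_inner_right ℂ fun y => ?_
    rw [mk2_surj y]
    simp only [comp_apply, smul_apply]
    rw [adjoint_inner_left, hA, hA, hE, inner_smul_left, inner_mk2, inner_mk2]
    simp only [inner_smul_left, inner_smul_right, hvv, mul_one, mul_zero, add_zero, map_zero,
      map_ofNat]
    ring
  -- ‖E‖ = 1
  have hm : ‖mk2 v (0:ℂ)‖ = 1 := by
    have := norm_mk2_sq v (0:ℂ)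
    rw [hv, norm_zero] at this
    nlinarith [norm_nonneg (mk2 v (0:ℂ))]
  have hEnorm : ‖E‖ = 1 := by
    refine le_antisymm ?_ ?_
    · refine ContinuousLinearMap.opNorm_le_bound _ zero_le_one fun x => ?_
      rw [one_mul, mk2_surj x, hE]
      have h1 : ‖mk2 ((inner ℂ v x.fst : ℂ) • v) (0:ℂ)‖ ^ 2 ≤ ‖mk2 x.fst x.snd‖ ^ 2 := by
        rw [norm_mk2_sq, norm_mk2_sq, norm_smul, hv, mul_one, norm_zero]
        have h2 : ‖(inner ℂ v x.fst : ℂ)‖ ≤ ‖x.fst‖ := by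
          simpa [hv] using norm_inner_le_norm (𝕜 := ℂ) v x.fst
        nlinarith [norm_nonneg (inner ℂ v x.fst : ℂ), norm_nonneg x.fst, sq_nonneg ‖x.snd‖]
      nlinarith [norm_nonneg (mk2 ((inner ℂ v x.fst : ℂ) • v) (0:ℂ)),
        norm_nonneg (mk2 x.fst x.snd)]
    · have h1 : E (mk2 v 0) = mk2 v 0 := by rw [hE, hvv, one_smul]
      have h2 := E.le_opNorm (mk2 v (0:ℂ))
      rw [h1, hm] at h2
      linarith
  -- ‖A‖² = 2
  have hAnorm : ‖A‖ ^ 2 = 2 := by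
    have h1 := ContinuousLinearMap.norm_adjoint_comp_self A
    rw [htwoE] at h1
    rw [norm_smul] at h1
    rw [hEnorm] at h1
    norm_num at h1
    rw [sq, ← h1]
  refine ⟨hA0, hzero, htwoE, hAnorm, ?_, ?_⟩
  · rw [hzero, norm_zero]
  · rw [hzero, norm_zero, hAnorm]; norm_num
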